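/- arXiv:2111.08838 — 2 statements merged into one kernel-verified Lean document; each statement's English description precedes it below -/
import Mathlib

section
/- For all positive integers n and m with not (n = 1 and m = 1), the corona graph P_n ∘ P_m is total edge product cordial; that is, there exists an edge labeling f* : E(P_n ∘ P_m) → {0,1} whose induced vertex labeling f satisfies |(v_f(0) + e_f(0)) − (v_f(1) + e_f(1))| ≤ 1. -/
open scoped Classical
open Finset SimpleGraph

/-- Adjacency relation of the corona product `G ∘ H`: take one copy of `G` and,
for each vertex `i` of `G`, a copy of `H` (indexed by `i`), joining `i` to every
vertex of its copy of `H`. -/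
def coronaAdj {α β : Type*} (G : SimpleGraph α) (H : SimpleGraph β) :
    α ⊕ α × β → α ⊕ α × β → Prop
  | Sum.inl u, Sum.inl v => G.Adj u v
  | Sum.inl u, Sum.inr (i, _) => u = i
  | Sum.inr (i, _), Sum.inl u => u = i
  | Sum.inr (i, x), Sum.inr (j, y) => i = j ∧ H.Adj x y

/-- The corona product `G ∘ H` of two simple graphs. -/
def corona {α β : Type*} (G : SimpleGraph α) (H : SimpleGraph β) :
    SimpleGraph (α ⊕ α × β) where
  Adj := coronaAdj G H
  symm := by
    constructor
    rintro (u | ⟨i, x⟩) (v | ⟨j, y⟩) h <;>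
      simp only [coronaAdj] at h ⊢
    · exact h.symm
    · exact h
    · exact h
    · exact ⟨h.1.symm, h.2.symm⟩
  loopless := by
    constructor
    rintro (u | ⟨i, x⟩) h <;> simp only [coronaAdj] at h
    · exact G.irrefl h
    · exact H.irrefl h.2

/-- The vertex labeling induced by an edge labeling `f`: the label of `v` is the
product of the labels of the edges incident to `v` (an empty product is `1`). -/
noncomputable def inducedLabel {α : Type*} [Fintype α] (G : SimpleGraph α)
    (f : Sym2 α → ℕ) (v : α) : ℕ :=
  ∏ u ∈ Finset.univ.filter (fun u => G.Adj v u), f s(v, u)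

/-- `eCount G f i` is the number of edges of `G` labeled `i` by `f`. -/
noncomputable def eCount {α : Type*} [Fintype α] (G : SimpleGraph α)
    (f : Sym2 α → ℕ) (i : ℕ) : ℕ :=
  (G.edgeFinset.filter (fun e => f e = i)).card

/-- `vCount G f i` is the number of vertices of `G` whose induced label is `i`. -/
noncomputable def vCount {α : Type*} [Fintype α] (G : SimpleGraph α)
    (f : Sym2 α → ℕ) (i : ℕ) : ℕ :=
  (Finset.univ.filter (fun v => inducedLabel G f v = i)).card

/-- `f` is a total edge product cordial labeling of `G`: it labels every edge `0` or `1`,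
and `|(v_f(0) + e_f(0)) - (v_f(1) + e_f(1))| ≤ 1`. -/
def IsTotalEdgeProductCordialLabeling {α : Type*} [Fintype α] (G : SimpleGraph α)
    (f : Sym2 α → ℕ) : Prop :=
  (∀ e ∈ G.edgeSet, f e = 0 ∨ f e = 1) ∧
  |((vCount G f 0 : ℤ) + (eCount G f 0 : ℤ)) - ((vCount G f 1 : ℤ) + (eCount G f 1 : ℤ))| ≤ 1

/-- `G` is total edge product cordial if it admits a total edge product cordial labeling. -/
def IsTotalEdgeProductCordial {α : Type*} [Fintype α] (G : SimpleGraph α) : Prop :=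
  ∃ f : Sym2 α → ℕ, IsTotalEdgeProductCordialLabeling G f

namespace TEPC

variable {n m : ℕ}

/-- numbering of vertices of the corona of paths -/
def nu : Fin n ⊕ Fin n × Fin m → ℕ
  | Sum.inl i => i * (m+1)
  | Sum.inr (i, x) => i * (m+1) + x + 1

lemma block_lt {i j : ℕ} (h : i < j) : i*(m+1) + m < j*(m+1) := by
  have h2 : (i+1)*(m+1) ≤ j*(m+1) := Nat.mul_le_mul_right _ (by omega)
  have h3 : (i+1)*(m+1) = i*(m+1)+(m+1) := Nat.succ_mul i (m+1)
  omega

lemma nu_lt (v : Fin n ⊕ Fin n × Fin m) : nu v < n * (m+1) := by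
  rcases v with i | ⟨i, x⟩ <;> simp only [nu]
  · have := block_lt (m := m) i.isLt
    omega
  · have := block_lt (m := m) i.isLt
    have hx : (x : ℕ) < m := x.isLt
    omega

lemma nu_inj : Function.Injective (nu (n := n) (m := m)) := by
  have key : ∀ i j : ℕ, i < j → i*(m+1) + m < j*(m+1) := fun _ _ h => block_lt h
  rintro (i | ⟨i, x⟩) (j | ⟨j, y⟩) h <;> simp only [nu] at h
  · have hij : (i : ℕ) = j := by
      rcases Nat.lt_trichotomy (i : ℕ) (j : ℕ) with hij | hij | hij
      · have := key _ _ hij; omega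
      · exact hij
      · have := key _ _ hij; omega
    simp [Fin.ext_iff, hij]
  · exfalso
    have hy : (y : ℕ) < m := y.isLt
    rcases Nat.lt_trichotomy (i : ℕ) (j : ℕ) with hij | hij | hij
    · have := key _ _ hij; omega
    · rw [hij] at h; omega
    · have := key _ _ hij; omega
  · exfalso
    have hx : (x : ℕ) < m := x.isLt
    rcases Nat.lt_trichotomy (i : ℕ) (j : ℕ) with hij | hij | hij
    · have := key _ _ hij; omega
    · rw [hij] at h; omega
    · have := key _ _ hij; omega
  · have hx : (x : ℕ) < m := x.isLt
    have hy : (y : ℕ) < m := y.isLt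
    have hij : (i : ℕ) = j := by
      rcases Nat.lt_trichotomy (i : ℕ) (j : ℕ) with hij | hij | hij
      · have := key _ _ hij; omega
      · exact hij
      · have := key _ _ hij; omega
    have hxy : (x : ℕ) = y := by rw [hij] at h; omega
    simp [Prod.ext_iff, Fin.ext_iff, hij, hxy]

lemma nu_surj (k : ℕ) (hk : k < n * (m+1)) :
    ∃ v : Fin n ⊕ Fin n × Fin m, nu v = k := by
  have hm1 : 0 < m + 1 := Nat.succ_pos m
  have hq : k / (m+1) < n := Nat.div_lt_iff_lt_mul hm1 |>.2 (by omega)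
  have hr : k % (m+1) < m + 1 := Nat.mod_lt _ hm1
  have hdm : k / (m+1) * (m+1) + k % (m+1) = k := Nat.div_add_mod' k (m+1)
  rcases Nat.eq_zero_or_pos (k % (m+1)) with h0 | h0
  · exact ⟨Sum.inl ⟨k / (m+1), hq⟩, by simp only [nu]; omega⟩
  · refine ⟨Sum.inr (⟨k / (m+1), hq⟩, ⟨k % (m+1) - 1, by omega⟩), ?_⟩
    simp only [nu]
    omega


/-- max of `nu` over an unordered pair -/
def numax : Sym2 (Fin n ⊕ Fin n × Fin m) → ℕ :=
  Sym2.lift ⟨fun u v => max (nu u) (nu v), fun u v => max_comm _ _⟩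

lemma lowdeg_card_eq_fiber (G' : SimpleGraph (Fin n ⊕ Fin n × Fin m))
    (v : Fin n ⊕ Fin n × Fin m) :
    (univ.filter fun u => G'.Adj v u ∧ nu u < nu v).card
      = (G'.edgeFinset.filter fun e => numax e = nu v).card := by
  refine Finset.card_bij (fun u _ => s(v, u)) ?_ ?_ ?_
  · intro u hu
    simp only [mem_filter, mem_univ, true_and] at hu
    simp only [mem_filter, mem_edgeFinset, mem_edgeSet]
    exact ⟨hu.1, by simp only [numax, Sym2.lift_mk]; exact max_eq_left (le_of_lt hu.2)⟩
  · intro u1 h1 u2 h2 h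
    exact Sym2.congr_right.mp h
  · intro e he
    simp only [mem_filter, mem_edgeFinset, mem_edgeSet] at he
    induction e using Sym2.ind with
    | _ x y =>
      obtain ⟨hadj, hmax⟩ := he
      simp only [numax, Sym2.lift_mk] at hmax
      rcases le_or_gt (nu x) (nu y) with hle | hlt
      · rw [max_eq_right hle] at hmax
        have hyv : y = v := nu_inj hmax
        subst hyv
        have hxv : nu x < nu y := lt_of_le_of_ne hle (fun hh => (G'.ne_of_adj hadj) (nu_inj hh))
        refine ⟨x, ?_, Sym2.eq_swap⟩
        simp only [mem_filter, mem_univ, true_and]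
        exact ⟨G'.adj_symm hadj, hmax ▸ hxv⟩
      · rw [max_eq_left (le_of_lt hlt)] at hmax
        have hxv : x = v := nu_inj hmax
        subst hxv
        refine ⟨y, ?_, rfl⟩
        simp only [mem_filter, mem_univ, true_and]
        exact ⟨hadj, hmax ▸ hlt⟩

lemma edge_card (G' : SimpleGraph (Fin n ⊕ Fin n × Fin m)) :
    G'.edgeFinset.card
      = ∑ v : Fin n ⊕ Fin n × Fin m,
          (univ.filter fun u => G'.Adj v u ∧ nu u < nu v).card := by
  have hmem : ∀ e ∈ G'.edgeFinset,
      numax e ∈ (univ : Finset (Fin n ⊕ Fin n × Fin m)).image nu := by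
    intro e _
    induction e using Sym2.ind with
    | _ x y =>
      simp only [numax, Sym2.lift_mk]
      rcases le_total (nu x) (nu y) with h | h
      · rw [max_eq_right h]; exact Finset.mem_image_of_mem nu (mem_univ y)
      · rw [max_eq_left h]; exact Finset.mem_image_of_mem nu (mem_univ x)
  rw [Finset.card_eq_sum_card_fiberwise hmem,
    Finset.sum_image (fun a _ b _ h => nu_inj h)]
  exact Finset.sum_congr rfl fun v _ => (lowdeg_card_eq_fiber G' v).symm


lemma corona_adj {α β : Type*} (G : SimpleGraph α) (H : SimpleGraph β)
    (a b : α ⊕ α × β) : (corona G H).Adj a b ↔ coronaAdj G H a b := Iff.rfl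

/-- number of neighbours below vertex number `k` -/
def dd (m k : ℕ) : ℕ := if k = 0 then 0 else if k % (m+1) ≤ 1 then 1 else 2

lemma dd_eval (q j : ℕ) (hj : j ≤ m) :
    dd m (q*(m+1)+j) = if q*(m+1)+j = 0 then 0 else if j ≤ 1 then 1 else 2 := by
  have hmod : (q*(m+1)+j) % (m+1) = j := by
    rw [mul_comm, Nat.mul_add_mod]
    exact Nat.mod_eq_of_lt (by omega)
  unfold dd
  rw [hmod]

lemma nu_lt_nu_inl {i j : Fin n} : nu (Sum.inl j : Fin n ⊕ Fin n × Fin m) <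
    nu (Sum.inl i : Fin n ⊕ Fin n × Fin m) ↔ (j : ℕ) < i := by
  simp only [nu]
  constructor
  · intro h
    by_contra hc
    push_neg at hc
    exact absurd (Nat.mul_le_mul_right (m+1) hc) (by omega)
  · intro h
    have := block_lt (m := m) h
    omega

lemma lowdeg_corona (hm : 0 < m) (v : Fin n ⊕ Fin n × Fin m) :
    (univ.filter fun u => (corona (pathGraph n) (pathGraph m)).Adj v u ∧ nu u < nu v).card
      = dd m (nu v) := by
  rcases v with i | ⟨i, x⟩
  · rcases Nat.eq_zero_or_pos (i : ℕ) with h0 | h0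
    · have hnu : nu (Sum.inl i : Fin n ⊕ Fin n × Fin m) = 0 := by
        simp [nu, h0]
      rw [hnu, dd, if_pos rfl, Finset.card_eq_zero, Finset.eq_empty_iff_forall_notMem]
      intro u hu
      simp only [mem_filter, mem_univ, true_and, hnu] at hu
      omega
    · have hset : (univ.filter fun u =>
          (corona (pathGraph n) (pathGraph m)).Adj (Sum.inl i) u ∧ nu u < nu (Sum.inl i : Fin n ⊕ Fin n × Fin m))
          = {Sum.inl ⟨(i : ℕ) - 1, by omega⟩} := by
        ext u
        simp only [mem_filter, mem_univ, true_and, mem_singleton]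
        constructor
        · rintro ⟨hadj, hlt⟩
          rcases u with j | ⟨j, y⟩
          · rw [corona_adj] at hadj
            simp only [coronaAdj, pathGraph_adj] at hadj
            rw [nu_lt_nu_inl] at hlt
            simp only [Sum.inl.injEq, Fin.ext_iff]
            omega
          · rw [corona_adj] at hadj
            simp only [coronaAdj] at hadj
            exfalso
            simp only [nu] at hlt
            rw [hadj] at hlt
            omega
        · rintro rfl
          refine ⟨?_, ?_⟩
          · rw [corona_adj]
            show (pathGraph n).Adj _ _
            rw [pathGraph_adj]
            right
            simp only []
            omega
          · rw [nu_lt_nu_inl]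
            simp only []
            omega
      rw [hset, Finset.card_singleton,
        show nu (Sum.inl i : Fin n ⊕ Fin n × Fin m) = (i : ℕ)*(m+1)+0 from rfl,
        dd_eval _ _ (by omega)]
      have : 0 < (i : ℕ) * (m+1) := Nat.mul_pos h0 (Nat.succ_pos m)
      split_ifs <;> omega
  · -- v = inr (i, x)
    have hddv : dd m (nu (Sum.inr (i, x) : Fin n ⊕ Fin n × Fin m))
        = if (x : ℕ) = 0 then 1 else 2 := by
      rw [show nu (Sum.inr (i, x) : Fin n ⊕ Fin n × Fin m) = (i:ℕ)*(m+1)+((x:ℕ)+1) from rfl,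
        dd_eval _ _ (by exact x.isLt)]
      split_ifs <;> omega
    rw [hddv]
    rcases Nat.eq_zero_or_pos (x : ℕ) with h0 | h0
    · rw [if_pos h0]
      have hset : (univ.filter fun u =>
          (corona (pathGraph n) (pathGraph m)).Adj (Sum.inr (i, x)) u ∧ nu u < nu (Sum.inr (i, x)))
          = {Sum.inl i} := by
        ext u
        simp only [mem_filter, mem_univ, true_and, mem_singleton]
        constructor
        · rintro ⟨hadj, hlt⟩
          rcases u with j | ⟨j, y⟩
          · rw [corona_adj] at hadj
            simp only [coronaAdj] at hadj
            simp [hadj]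
          · rw [corona_adj] at hadj
            simp only [coronaAdj] at hadj
            obtain ⟨rfl, hpa⟩ := hadj
            rw [pathGraph_adj] at hpa
            simp only [nu] at hlt
            exfalso
            omega
        · rintro rfl
          refine ⟨?_, ?_⟩
          · rw [corona_adj]
            show (i = i)
            rfl
          · simp only [nu]
            omega
      rw [hset, Finset.card_singleton]
    · rw [if_neg (by omega)]
      have hset : (univ.filter fun u =>
          (corona (pathGraph n) (pathGraph m)).Adj (Sum.inr (i, x)) u ∧ nu u < nu (Sum.inr (i, x)))
          = {Sum.inl i, Sum.inr (i, ⟨(x:ℕ)-1, by omega⟩)} := by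
        ext u
        simp only [mem_filter, mem_univ, true_and, mem_insert, mem_singleton]
        constructor
        · rintro ⟨hadj, hlt⟩
          rcases u with j | ⟨j, y⟩
          · rw [corona_adj] at hadj
            simp only [coronaAdj] at hadj
            simp [hadj]
          · rw [corona_adj] at hadj
            simp only [coronaAdj] at hadj
            obtain ⟨rfl, hpa⟩ := hadj
            rw [pathGraph_adj] at hpa
            simp only [nu] at hlt
            right
            simp only [Sum.inr.injEq, Prod.mk.injEq, Fin.ext_iff]
            exact ⟨by trivial, by omega⟩
        · rintro (rfl | rfl)
          · refine ⟨?_, ?_⟩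
            · rw [corona_adj]
              show (i = i)
              rfl
            · simp only [nu]
              omega
          · refine ⟨?_, ?_⟩
            · rw [corona_adj]
              refine ⟨rfl, ?_⟩
              rw [pathGraph_adj]
              right
              simp only []
              omega
            · simp only [nu]
              omega
      rw [hset, Finset.card_pair (by simp)]


/-- subgraph of the corona induced by vertices with number `< c` -/
def cutG (n m c : ℕ) : SimpleGraph (Fin n ⊕ Fin n × Fin m) where
  Adj u v := (corona (pathGraph n) (pathGraph m)).Adj u v ∧ nu u < c ∧ nu v < c
  symm := ⟨fun u v h => ⟨(corona _ _).adj_symm h.1, h.2.2, h.2.1⟩⟩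
  loopless := ⟨fun u h => (corona _ _).irrefl h.1⟩

/-- the cut graph together with one extra edge `s(w, w')` -/
def cutGx (n m c : ℕ) (w w' : Fin n ⊕ Fin n × Fin m) :
    SimpleGraph (Fin n ⊕ Fin n × Fin m) where
  Adj u v := (corona (pathGraph n) (pathGraph m)).Adj u v ∧
    ((nu u < c ∧ nu v < c) ∨ s(u, v) = s(w, w'))
  symm := by
    constructor
    rintro u v ⟨h1, h2 | h2⟩
    · exact ⟨(corona _ _).adj_symm h1, Or.inl ⟨h2.2, h2.1⟩⟩
    · exact ⟨(corona _ _).adj_symm h1, Or.inr (by rw [Sym2.eq_swap]; exact h2)⟩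
  loopless := ⟨fun u h => (corona _ _).irrefl h.1⟩

lemma lowdeg_cut (hm : 0 < m) (c : ℕ) (v : Fin n ⊕ Fin n × Fin m) :
    (univ.filter fun u => (cutG n m c).Adj v u ∧ nu u < nu v).card
      = if nu v < c then dd m (nu v) else 0 := by
  by_cases hv : nu v < c
  · rw [if_pos hv, ← lowdeg_corona (n := n) hm v]
    congr 1
    apply Finset.filter_congr
    intro u _
    constructor
    · rintro ⟨⟨h1, _, _⟩, h4⟩
      exact ⟨h1, h4⟩
    · rintro ⟨h1, h4⟩
      exact ⟨⟨h1, hv, lt_trans h4 hv⟩, h4⟩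
  · rw [if_neg hv, Finset.card_eq_zero, Finset.eq_empty_iff_forall_notMem]
    intro u hu
    simp only [mem_filter, mem_univ, true_and] at hu
    simp only [cutG] at hu
    exact hv hu.1.2.1

lemma lowdeg_cutx (hm : 0 < m) (c : ℕ) (w w' : Fin n ⊕ Fin n × Fin m)
    (hw : nu w = c) (hw' : nu w' + 1 = c)
    (hadj : (corona (pathGraph n) (pathGraph m)).Adj w w')
    (v : Fin n ⊕ Fin n × Fin m) :
    (univ.filter fun u => (cutGx n m c w w').Adj v u ∧ nu u < nu v).card
      = (if nu v < c then dd m (nu v) else 0) + (if v = w then 1 else 0) := by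
  by_cases hvw : v = w
  · subst hvw
    rw [if_neg (by omega), if_pos rfl]
    have hset : (univ.filter fun u => (cutGx n m c v w').Adj v u ∧ nu u < nu v) = {w'} := by
      ext u
      simp only [mem_filter, mem_univ, true_and, mem_singleton]
      simp only [cutGx]
      constructor
      · rintro ⟨⟨h1, h2 | h2⟩, h4⟩
        · exact absurd h2.1 (by omega)
        · rcases Sym2.eq_iff.mp h2 with ⟨-, rfl⟩ | ⟨h5, h6⟩
          · rfl
          · exfalso; rw [h6] at h4; omega
      · rintro rfl
        exact ⟨⟨hadj, Or.inr rfl⟩, by omega⟩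
    rw [hset, Finset.card_singleton]
  · rw [if_neg hvw, ← lowdeg_cut (n := n) hm c v, Nat.add_zero]
    congr 1
    apply Finset.filter_congr
    intro u _
    simp only [cutGx, cutG]
    constructor
    · rintro ⟨⟨h1, h2 | h2⟩, h4⟩
      · exact ⟨⟨h1, h2⟩, h4⟩
      · exfalso
        rcases Sym2.eq_iff.mp h2 with ⟨h5, h6⟩ | ⟨h5, h6⟩
        · exact hvw h5
        · rw [h5, h6] at h4; omega
    · rintro ⟨⟨h1, h2⟩, h4⟩
      exact ⟨⟨h1, Or.inl h2⟩, h4⟩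

lemma sum_nu (g : ℕ → ℕ) :
    ∑ v : Fin n ⊕ Fin n × Fin m, g (nu v) = ∑ k ∈ range (n*(m+1)), g k := by
  refine Finset.sum_bij (fun v _ => nu v) ?_ ?_ ?_ ?_
  · intro v _; exact Finset.mem_range.mpr (nu_lt v)
  · intro v1 _ v2 _ h; exact nu_inj h
  · intro k hk
    obtain ⟨v, hv⟩ := nu_surj k (Finset.mem_range.mp hk)
    exact ⟨v, mem_univ v, hv⟩
  · intro v _; rfl

lemma sum_if_cut (c : ℕ) (hc : c ≤ n*(m+1)) :
    ∑ v : Fin n ⊕ Fin n × Fin m, (if nu v < c then dd m (nu v) else 0)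
      = ∑ k ∈ range c, dd m k := by
  refine Eq.trans (sum_nu (fun k => if k < c then dd m k else 0)) ?_
  rw [← Finset.sum_filter]
  congr 1
  ext k
  simp only [mem_filter, mem_range]
  omega

lemma edge_card_cut (hm : 0 < m) (c : ℕ) (hc : c ≤ n*(m+1)) :
    (cutG n m c).edgeFinset.card = ∑ k ∈ range c, dd m k := by
  rw [edge_card, Finset.sum_congr rfl fun v _ => lowdeg_cut hm c v]
  exact sum_if_cut c hc

lemma edge_card_corona (hm : 0 < m) :
    (corona (pathGraph n) (pathGraph m)).edgeFinset.card = ∑ k ∈ range (n*(m+1)), dd m k := by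
  rw [edge_card, Finset.sum_congr rfl fun v _ => lowdeg_corona hm v]
  exact sum_nu _

lemma edge_card_cutx (hm : 0 < m) (c : ℕ) (hc : c ≤ n*(m+1)) (w w' : Fin n ⊕ Fin n × Fin m)
    (hw : nu w = c) (hw' : nu w' + 1 = c)
    (hadj : (corona (pathGraph n) (pathGraph m)).Adj w w') :
    (cutGx n m c w w').edgeFinset.card = (∑ k ∈ range c, dd m k) + 1 := by
  rw [edge_card,
    Finset.sum_congr rfl fun v _ => lowdeg_cutx hm c w w' hw hw' hadj v,
    Finset.sum_add_distrib, sum_if_cut c hc,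
    Finset.sum_ite_eq' univ w (fun _ => 1), if_pos (mem_univ w)]


lemma dd_block0 (hm : 0 < m) (q : ℕ) (hq : 0 < q) : dd m (q*(m+1)) = 1 := by
  have h1 : 0 < q*(m+1) := Nat.mul_pos hq (Nat.succ_pos m)
  have := dd_eval (m := m) q 0 (by omega)
  rw [Nat.add_zero] at this
  rw [this, if_neg (by omega), if_pos (by omega)]

lemma sum_dd_tail2 (hm : 0 < m) (q : ℕ) (hq : 0 < q) (s : ℕ) (hs2 : 2 ≤ s) (hs : s ≤ m+1) :
    (∑ j ∈ range s, dd m (q*(m+1)+j)) = 2*s - 2 := by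
  induction s with
  | zero => omega
  | succ t ih =>
    rcases Nat.lt_or_ge t 2 with ht | ht
    · have ht1 : t = 1 := by omega
      subst ht1
      rw [Finset.sum_range_succ, Finset.sum_range_succ, Finset.range_zero, Finset.sum_empty,
        dd_eval q 1 (by omega), show q*(m+1)+0 = q*(m+1) from rfl, dd_block0 hm q hq]
      have h1 : 0 < q*(m+1) := Nat.mul_pos hq (Nat.succ_pos m)
      rw [if_neg (by omega), if_pos (by omega)]
    · rw [Finset.sum_range_succ, ih ht (by omega), dd_eval q t (by omega)]
      have h1 : 0 < q*(m+1) := Nat.mul_pos hq (Nat.succ_pos m)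
      rw [if_neg (by omega), if_neg (by omega)]
      omega

lemma sum_dd_head2 (hm : 0 < m) (s : ℕ) (hs2 : 2 ≤ s) (hs : s ≤ m+1) :
    (∑ j ∈ range s, dd m j) = 2*s - 3 := by
  induction s with
  | zero => omega
  | succ t ih =>
    rcases Nat.lt_or_ge t 2 with ht | ht
    · have ht1 : t = 1 := by omega
      subst ht1
      rw [Finset.sum_range_succ, Finset.sum_range_succ, Finset.range_zero, Finset.sum_empty]
      have h0 : dd m 0 = 0 := by rw [dd, if_pos rfl]
      have h1 : dd m 1 = 1 := by
        rw [dd, if_neg (by omega), if_pos (by rw [Nat.mod_eq_of_lt (by omega)])]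
      rw [h0, h1]
    · rw [Finset.sum_range_succ, ih ht (by omega)]
      have h2 : dd m t = 2 := by
        have := dd_eval (m := m) 0 t (by omega)
        rw [zero_mul, Nat.zero_add] at this
        rw [this, if_neg (by omega), if_neg (by omega)]
      rw [h2]
      omega

lemma sum_dd_full (hm : 0 < m) (q : ℕ) (hq : 0 < q) :
    (∑ k ∈ range (q*(m+1)), dd m k) = 2*q*m - 1 := by
  induction q with
  | zero => omega
  | succ t ih =>
    rcases Nat.eq_zero_or_pos t with rfl | ht
    · rw [show (0+1)*(m+1) = m+1 by ring, sum_dd_head2 hm (m+1) (by omega) le_rfl,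
        show 2*(0+1)*m = 2*m by ring]
      omega
    · rw [show (t+1)*(m+1) = t*(m+1)+(m+1) by ring, Finset.sum_range_add, ih ht,
        sum_dd_tail2 hm t ht (m+1) (by omega) le_rfl]
      have e1 : 2*(t+1)*m = 2*t*m + 2*m := by ring
      have e2 : 0 < 2*t*m := Nat.mul_pos (Nat.mul_pos (by omega) ht) hm
      omega

lemma sum_dd_r (hm : 0 < m) (q r : ℕ) (hr : 2 ≤ r) (hrm : r ≤ m) :
    (∑ k ∈ range (q*(m+1)+r), dd m k) = 2*q*m + 2*r - 3 := by
  rcases Nat.eq_zero_or_pos q with rfl | hq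
  · rw [zero_mul, Nat.zero_add, sum_dd_head2 hm r hr (by omega), show 2*0*m = 0 by ring]
    omega
  · rw [Finset.sum_range_add, sum_dd_full hm q hq, sum_dd_tail2 hm q hq r hr (by omega)]
    have e2 : 0 < 2*q*m := Nat.mul_pos (Nat.mul_pos (by omega) hq) hm
    omega

lemma sum_dd_one (hm : 0 < m) (q : ℕ) (hq : 0 < q) :
    (∑ k ∈ range (q*(m+1)+1), dd m k) = 2*q*m := by
  rw [Finset.sum_range_add, sum_dd_full hm q hq, Finset.sum_range_succ, Finset.range_zero,
    Finset.sum_empty, Nat.zero_add, show q*(m+1)+0 = q*(m+1) by omega, dd_block0 hm q hq]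
  have e2 : 0 < 2*q*m := Nat.mul_pos (Nat.mul_pos (by omega) hq) hm
  omega

noncomputable def lab (n m c : ℕ) : Sym2 (Fin n ⊕ Fin n × Fin m) → ℕ :=
  fun e => if ∀ v ∈ e, nu v < c then 0 else 1

noncomputable def labx (n m c : ℕ) (w w' : Fin n ⊕ Fin n × Fin m) :
    Sym2 (Fin n ⊕ Fin n × Fin m) → ℕ :=
  fun e => if (∀ v ∈ e, nu v < c) ∨ e = s(w, w') then 0 else 1

lemma lab_01 (n m c : ℕ) (e : Sym2 (Fin n ⊕ Fin n × Fin m)) :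
    lab n m c e = 0 ∨ lab n m c e = 1 := by
  unfold lab; split_ifs <;> simp

lemma labx_01 (n m c : ℕ) (w w' : Fin n ⊕ Fin n × Fin m)
    (e : Sym2 (Fin n ⊕ Fin n × Fin m)) : labx n m c w w' e = 0 ∨ labx n m c w w' e = 1 := by
  unfold labx; split_ifs <;> simp

lemma lab_eq_zero_iff {c : ℕ} {e : Sym2 (Fin n ⊕ Fin n × Fin m)} :
    lab n m c e = 0 ↔ ∀ v ∈ e, nu v < c := by
  unfold lab; split_ifs with h
  · exact iff_of_true rfl h
  · exact ⟨fun hh => by simp at hh, fun hh => absurd hh h⟩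

lemma labx_eq_zero_iff {c : ℕ} {w w' : Fin n ⊕ Fin n × Fin m}
    {e : Sym2 (Fin n ⊕ Fin n × Fin m)} :
    labx n m c w w' e = 0 ↔ ((∀ v ∈ e, nu v < c) ∨ e = s(w, w')) := by
  unfold labx; split_ifs with h
  · exact iff_of_true rfl h
  · exact ⟨fun hh => by simp at hh, fun hh => absurd hh h⟩

lemma eCount_add {α : Type*} [Fintype α] (G : SimpleGraph α) (f : Sym2 α → ℕ)
    (hf : ∀ e, f e = 0 ∨ f e = 1) :
    eCount G f 0 + eCount G f 1 = G.edgeFinset.card := by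
  unfold eCount
  have h1 : G.edgeFinset.filter (fun e => f e = 1)
      = G.edgeFinset.filter (fun e => ¬ (f e = 0)) := by
    ext e
    simp only [mem_filter, and_congr_right_iff]
    intro _
    rcases hf e with h | h <;> simp [h]
  rw [h1]
  exact Finset.card_filter_add_card_filter_not (fun e => f e = 0)

lemma eCount0_lab (c : ℕ) :
    eCount (corona (pathGraph n) (pathGraph m)) (lab n m c) 0 = (cutG n m c).edgeFinset.card := by
  unfold eCount
  congr 1
  ext e
  induction e using Sym2.ind with
  | _ a b =>
    simp only [mem_filter, mem_edgeFinset, mem_edgeSet, lab_eq_zero_iff, Sym2.mem_iff]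
    constructor
    · rintro ⟨h1, h2⟩
      exact ⟨h1, h2 a (Or.inl rfl), h2 b (Or.inr rfl)⟩
    · rintro ⟨h1, h2, h3⟩
      refine ⟨h1, ?_⟩
      rintro v (rfl | rfl) <;> assumption

lemma eCount0_labx (c : ℕ) (w w' : Fin n ⊕ Fin n × Fin m) :
    eCount (corona (pathGraph n) (pathGraph m)) (labx n m c w w') 0
      = (cutGx n m c w w').edgeFinset.card := by
  unfold eCount
  congr 1
  ext e
  induction e using Sym2.ind with
  | _ a b =>
    simp only [mem_filter, mem_edgeFinset, mem_edgeSet, labx_eq_zero_iff, Sym2.mem_iff]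
    constructor
    · rintro ⟨h1, h2 | h2⟩
      · exact ⟨h1, Or.inl ⟨h2 a (Or.inl rfl), h2 b (Or.inr rfl)⟩⟩
      · exact ⟨h1, Or.inr h2⟩
    · rintro ⟨h1, h2 | h2⟩
      · refine ⟨h1, Or.inl ?_⟩
        rintro v (rfl | rfl)
        · exact h2.1
        · exact h2.2
      · exact ⟨h1, Or.inr h2⟩

lemma exNbr (hm : 0 < m) {c : ℕ} (hc : 2 ≤ c) (v : Fin n ⊕ Fin n × Fin m)
    (hv : nu v < c) : ∃ u, (corona (pathGraph n) (pathGraph m)).Adj v u ∧ nu u < c := by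
  rcases v with i | ⟨i, x⟩
  · rcases Nat.eq_zero_or_pos (i : ℕ) with h0 | h0
    · refine ⟨Sum.inr (i, ⟨0, hm⟩), ?_, ?_⟩
      · rw [corona_adj]; exact rfl
      · simp only [nu, h0]
        omega
    · refine ⟨Sum.inl ⟨(i : ℕ) - 1, by omega⟩, ?_, ?_⟩
      · rw [corona_adj]
        show (pathGraph n).Adj _ _
        rw [pathGraph_adj]
        right
        simp only []
        omega
      · have := nu_lt_nu_inl (m := m) (i := i) (j := ⟨(i : ℕ) - 1, by omega⟩)
        simp only [nu] at hv ⊢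
        simp only [nu] at this
        omega
  · refine ⟨Sum.inl i, ?_, ?_⟩
    · rw [corona_adj]; exact rfl
    · simp only [nu] at hv ⊢
      omega

lemma induced_lab_eq (hm : 0 < m) {c : ℕ} (hc : 2 ≤ c) (v : Fin n ⊕ Fin n × Fin m) :
    inducedLabel (corona (pathGraph n) (pathGraph m)) (lab n m c) v
      = if nu v < c then 0 else 1 := by
  by_cases hv : nu v < c
  · rw [if_pos hv]
    obtain ⟨u, hadj, hu⟩ := exNbr hm hc v hv
    apply Finset.prod_eq_zero (i := u) (by simp [hadj])
    rw [lab_eq_zero_iff]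
    intro z hz
    rw [Sym2.mem_iff] at hz
    rcases hz with rfl | rfl <;> assumption
  · rw [if_neg hv]
    apply Finset.prod_eq_one
    intro u hu
    unfold lab
    rw [if_neg]
    intro hall
    exact hv (hall v (Sym2.mem_mk_left v u))

lemma induced_labx_eq (hm : 0 < m) {c : ℕ} (hc : 2 ≤ c) (w w' : Fin n ⊕ Fin n × Fin m)
    (hw : nu w = c) (hw' : nu w' + 1 = c)
    (hadj : (corona (pathGraph n) (pathGraph m)).Adj w w') (v : Fin n ⊕ Fin n × Fin m) :
    inducedLabel (corona (pathGraph n) (pathGraph m)) (labx n m c w w') v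
      = if nu v < c ∨ v = w then 0 else 1 := by
  by_cases hv : nu v < c ∨ v = w
  · rw [if_pos hv]
    rcases hv with hv | rfl
    · obtain ⟨u, huadj, hu⟩ := exNbr hm hc v hv
      apply Finset.prod_eq_zero (i := u) (by simp [huadj])
      rw [labx_eq_zero_iff]
      left
      intro z hz
      rw [Sym2.mem_iff] at hz
      rcases hz with rfl | rfl <;> assumption
    · apply Finset.prod_eq_zero (i := w') (by simp [hadj])
      rw [labx_eq_zero_iff]
      right
      rfl
  · push_neg at hv
    rw [if_neg (by push_neg; exact hv)]
    apply Finset.prod_eq_one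
    intro u hu
    unfold labx
    rw [if_neg]
    rintro (hall | hpair)
    · exact absurd (hall v (Sym2.mem_mk_left v u)) (by omega)
    · rcases Sym2.eq_iff.mp hpair with ⟨h1, h2⟩ | ⟨h1, h2⟩
      · exact hv.2 h1
      · rw [h1] at hv
        omega

lemma card_nu_lt (c : ℕ) (hc : c ≤ n*(m+1)) :
    (univ.filter fun v : Fin n ⊕ Fin n × Fin m => nu v < c).card = c := by
  refine Eq.trans (Finset.card_bij (fun v _ => nu v) ?_ ?_ ?_) (Finset.card_range c)
  · intro v hv
    simp only [mem_filter] at hv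
    exact Finset.mem_range.mpr hv.2
  · intro v1 _ v2 _ h
    exact nu_inj h
  · intro k hk
    rw [Finset.mem_range] at hk
    obtain ⟨v, hv⟩ := nu_surj (n := n) (m := m) k (by omega)
    exact ⟨v, by simp [hv, hk], hv⟩

lemma card_V : (Fintype.card (Fin n ⊕ Fin n × Fin m)) = n*(m+1) := by
  simp [Fintype.card_sum, Fintype.card_prod]
  ring

lemma vCount0_lab (hm : 0 < m) {c : ℕ} (hc : 2 ≤ c) (hcN : c ≤ n*(m+1)) :
    vCount (corona (pathGraph n) (pathGraph m)) (lab n m c) 0 = c := by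
  unfold vCount
  rw [Finset.filter_congr (fun v _ => show _ ↔ nu v < c by
    rw [induced_lab_eq hm hc v]; split_ifs with h <;> simp [h])]
  exact card_nu_lt c hcN

lemma vCount1_lab (hm : 0 < m) {c : ℕ} (hc : 2 ≤ c) (hcN : c ≤ n*(m+1)) :
    vCount (corona (pathGraph n) (pathGraph m)) (lab n m c) 1 = n*(m+1) - c := by
  unfold vCount
  rw [Finset.filter_congr (fun v _ => show _ ↔ ¬ (nu v < c) by
    rw [induced_lab_eq hm hc v]; split_ifs with h <;> simp [h])]
  rw [Finset.filter_not, Finset.card_sdiff_of_subset (Finset.filter_subset _ _), card_nu_lt c hcN]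
  rw [Finset.card_univ, card_V]

lemma vCount0_labx (hm : 0 < m) {c : ℕ} (hc : 2 ≤ c) (hcN : c ≤ n*(m+1))
    (w w' : Fin n ⊕ Fin n × Fin m) (hw : nu w = c) (hw' : nu w' + 1 = c)
    (hadj : (corona (pathGraph n) (pathGraph m)).Adj w w') :
    vCount (corona (pathGraph n) (pathGraph m)) (labx n m c w w') 0 = c + 1 := by
  unfold vCount
  rw [Finset.filter_congr (fun v _ => show _ ↔ (nu v < c ∨ v = w) by
    rw [induced_labx_eq hm hc w w' hw hw' hadj v]; split_ifs with h <;> simp [h])]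
  have : (univ.filter fun v : Fin n ⊕ Fin n × Fin m => nu v < c ∨ v = w)
      = insert w (univ.filter fun v => nu v < c) := by
    ext v
    simp only [mem_filter, mem_univ, true_and, mem_insert]
    tauto
  rw [this, Finset.card_insert_of_notMem (by simp only [mem_filter]; omega),
    card_nu_lt c hcN]

lemma vCount1_labx (hm : 0 < m) {c : ℕ} (hc : 2 ≤ c) (hcN : c ≤ n*(m+1))
    (w w' : Fin n ⊕ Fin n × Fin m) (hw : nu w = c) (hw' : nu w' + 1 = c)
    (hadj : (corona (pathGraph n) (pathGraph m)).Adj w w') :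
    vCount (corona (pathGraph n) (pathGraph m)) (labx n m c w w') 1 = n*(m+1) - (c+1) := by
  unfold vCount
  rw [Finset.filter_congr (fun v _ => show _ ↔ ¬ (nu v < c ∨ v = w) by
    rw [induced_labx_eq hm hc w w' hw hw' hadj v]; split_ifs with h <;> simp [h])]
  rw [Finset.filter_not, Finset.card_sdiff_of_subset (Finset.filter_subset _ _)]
  have : (univ.filter fun v : Fin n ⊕ Fin n × Fin m => nu v < c ∨ v = w)
      = insert w (univ.filter fun v => nu v < c) := by
    ext v
    simp only [mem_filter, mem_univ, true_and, mem_insert]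
    tauto
  rw [this, Finset.card_insert_of_notMem (by simp only [mem_filter]; omega),
    card_nu_lt c hcN, Finset.card_univ, card_V]
end TEPC

open TEPC in
/-- For all positive integers `n` and `m` with not (`n = 1` and `m = 1`),
the corona graph `P_n ∘ P_m` is total edge product cordial. -/
theorem corona_path_path_isTotalEdgeProductCordial (n m : ℕ) (hn : 0 < n) (hm : 0 < m)
    (h : ¬ (n = 1 ∧ m = 1)) :
    IsTotalEdgeProductCordial (corona (pathGraph n) (pathGraph m)) := by
  set G := corona (pathGraph n) (pathGraph m) with hG
  have hE : G.edgeFinset.card = 2*n*m - 1 := by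
    rw [hG, edge_card_corona hm, sum_dd_full hm n hn]
  have hnm1 : 1 ≤ 2*n*m := Nat.mul_pos (Nat.mul_pos (by omega) hn) hm
  rcases Nat.even_or_odd n with ⟨a, hn2⟩ | ⟨a, hn2⟩
  · -- n even, n = a + a, a ≥ 1
    have ha : 0 < a := by omega
    set c := a*(m+1) with hc
    have hc2 : 2 ≤ c := by
      have : 1*(1+1) ≤ a*(m+1) := Nat.mul_le_mul (by omega) (by omega)
      omega
    have hcN : c ≤ n*(m+1) := Nat.mul_le_mul_right _ (by omega)
    refine ⟨lab n m c, fun e _ => lab_01 n m c e, ?_⟩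
    have hv0 : vCount G (lab n m c) 0 = c := vCount0_lab hm hc2 hcN
    have hv1 : vCount G (lab n m c) 1 = n*(m+1) - c := vCount1_lab hm hc2 hcN
    have he0 : eCount G (lab n m c) 0 = 2*a*m - 1 := by
      rw [hG, eCount0_lab c, edge_card_cut hm c hcN, hc, sum_dd_full hm a ha]
    have hesum : eCount G (lab n m c) 0 + eCount G (lab n m c) 1 = 2*n*m - 1 := by
      rw [eCount_add G _ (lab_01 n m c), hE]
    have ham1 : 1 ≤ 2*a*m := Nat.mul_pos (Nat.mul_pos (by omega) ha) hm
    have I1 : a*(m+1) = a*m + a := by ring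
    have I2 : n*(m+1) = n*m + n := by ring
    have I3 : n*m = a*m + a*m := by rw [hn2]; ring
    have I4 : 2*a*m = a*m + a*m := by ring
    have I5 : 2*n*m = n*m + n*m := by ring
    rw [abs_le]
    constructor <;> omega
  · -- n odd, n = 2a+1
    rcases Nat.lt_or_ge m 2 with hm2 | hm2
    · -- m = 1, so a ≥ 1
      have hm1 : m = 1 := by omega
      subst hm1
      have ha : 0 < a := by omega
      set c := a*(1+1)+1 with hc
      have hc2 : 2 ≤ c := by omega
      have hcN : c ≤ n*(1+1) := by omega
      refine ⟨lab n 1 c, fun e _ => lab_01 n 1 c e, ?_⟩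
      have hv0 : vCount G (lab n 1 c) 0 = c := vCount0_lab hm hc2 hcN
      have hv1 : vCount G (lab n 1 c) 1 = n*(1+1) - c := vCount1_lab hm hc2 hcN
      have he0 : eCount G (lab n 1 c) 0 = 2*a*1 := by
        rw [hG, eCount0_lab c, edge_card_cut hm c hcN, hc, sum_dd_one hm a ha]
      have hesum : eCount G (lab n 1 c) 0 + eCount G (lab n 1 c) 1 = 2*n*1 - 1 := by
        rw [eCount_add G _ (lab_01 n 1 c), hE]
      rw [abs_le]
      constructor <;> omega
    · -- m ≥ 2
      rcases Nat.even_or_odd m with ⟨b, hm2e⟩ | ⟨b, hm2o⟩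
      · -- m even, m = b + b, b ≥ 1
        have hb : 0 < b := by omega
        set c := a*(m+1)+(b+1) with hc
        have hc2 : 2 ≤ c := by omega
        have J1 : a*(m+1) = a*m + a := by ring
        have J2 : n*(m+1) = n*m + n := by ring
        have J3 : n*m = a*m + a*m + m := by rw [hn2]; ring
        have J4 : 2*a*m = a*m + a*m := by ring
        have J5 : 2*n*m = n*m + n*m := by ring
        have hcN : c ≤ n*(m+1) := by omega
        refine ⟨lab n m c, fun e _ => lab_01 n m c e, ?_⟩
        have hv0 : vCount G (lab n m c) 0 = c := vCount0_lab hm hc2 hcN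
        have hv1 : vCount G (lab n m c) 1 = n*(m+1) - c := vCount1_lab hm hc2 hcN
        have he0 : eCount G (lab n m c) 0 = 2*a*m + 2*(b+1) - 3 := by
          rw [hG, eCount0_lab c, edge_card_cut hm c hcN, hc,
            sum_dd_r hm a (b+1) (by omega) (by omega)]
        have hesum : eCount G (lab n m c) 0 + eCount G (lab n m c) 1 = 2*n*m - 1 := by
          rw [eCount_add G _ (lab_01 n m c), hE]
        rw [abs_le]
        constructor <;> omega
      · -- m odd ≥ 3, m = 2b+1, b ≥ 1
        have hb : 0 < b := by omega
        set c := a*(m+1)+(b+1) with hc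
        have hc2 : 2 ≤ c := by omega
        have J1 : a*(m+1) = a*m + a := by ring
        have J2 : n*(m+1) = n*m + n := by ring
        have J3 : n*m = a*m + a*m + m := by rw [hn2]; ring
        have J4 : 2*a*m = a*m + a*m := by ring
        have J5 : 2*n*m = n*m + n*m := by ring
        have hcN : c ≤ n*(m+1) := by omega
        have haltn : a < n := by omega
        have hbltm : b < m := by omega
        have hb1ltm : b - 1 < m := by omega
        set w : Fin n ⊕ Fin n × Fin m := Sum.inr (⟨a, haltn⟩, ⟨b, hbltm⟩) with hwdef
        set w' : Fin n ⊕ Fin n × Fin m := Sum.inr (⟨a, haltn⟩, ⟨b-1, hb1ltm⟩) with hw'def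
        have hw : nu w = c := by simp only [hwdef, nu]; omega
        have hw' : nu w' + 1 = c := by simp only [hw'def, nu]; omega
        have hadj : (corona (pathGraph n) (pathGraph m)).Adj w w' := by
          rw [corona_adj]
          refine ⟨rfl, ?_⟩
          rw [pathGraph_adj]
          right
          simp only []
          omega
        refine ⟨labx n m c w w', fun e _ => labx_01 n m c w w' e, ?_⟩
        have hv0 : vCount G (labx n m c w w') 0 = c + 1 :=
          vCount0_labx hm hc2 hcN w w' hw hw' hadj
        have hv1 : vCount G (labx n m c w w') 1 = n*(m+1) - (c+1) :=
          vCount1_labx hm hc2 hcN w w' hw hw' hadj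
        have he0 : eCount G (labx n m c w w') 0 = 2*a*m + 2*(b+1) - 3 + 1 := by
          rw [hG, eCount0_labx c w w', edge_card_cutx hm c hcN w w' hw hw' hadj, hc,
            sum_dd_r hm a (b+1) (by omega) (by omega)]
        have hesum : eCount G (labx n m c w w') 0 + eCount G (labx n m c w w') 1
            = 2*n*m - 1 := by
          rw [eCount_add G _ (labx_01 n m c w w'), hE]
        rw [abs_le]
        constructor <;> omega
end

section
/- Let n be an even positive integer and m ≥ 3 an integer. Then the corona graph P_n ∘ C_m admits an edge labeling f* : E(P_n ∘ C_m) → {0,1} whose induced vertex labeling f satisfies e_f(0) = (2nm + n − 2)/2, e_f(1) = (2nm + n)/2, and v_f(0) = v_f(1) = (n + nm)/2. In particular |(v_f(0) + e_f(0)) − (v_f(1) + e_f(1))| ≤ 1, so P_n ∘ C_m is total edge product cordial for even n and m ≥ 3. -/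
open scoped Classical
open Finset SimpleGraph

namespace CoronaTEPC

variable {n m : ℕ}


/-- nat helper: mod facts -/
lemma nat_succ_mod_ne {m a : ℕ} (hm : 3 ≤ m) (ha : a < m) :
    ((a + 1) % m + 1) % m ≠ a := by
  rcases Nat.lt_or_ge (a + 1) m with h | h
  · rw [Nat.mod_eq_of_lt h]
    rcases Nat.lt_or_ge (a + 2) m with h2 | h2
    · rw [Nat.mod_eq_of_lt (by omega)]; omega
    · have : a + 1 + 1 = m := by omega
      rw [this, Nat.mod_self]; omega
  · have : a + 1 = m := by omega
    rw [this, Nat.mod_self, Nat.mod_eq_of_lt (by omega)]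
    omega

lemma sub_val_eq_one_iff {m : ℕ} (hm : 3 ≤ m) (x y : Fin m) :
    ((y - x : Fin m) : ℕ) = 1 ↔ (y : ℕ) = ((x : ℕ) + 1) % m := by
  rw [Fin.sub_def]
  simp only []
  constructor
  · intro h
    have hx := x.isLt; have hy := y.isLt
    rcases le_or_gt (x : ℕ) (y : ℕ) with hle | hlt
    · have : (m - (x:ℕ) + (y:ℕ)) = m + ((y:ℕ) - (x:ℕ)) := by omega
      rw [this, Nat.add_mod_left, Nat.mod_eq_of_lt (by omega)] at h
      have : (y:ℕ) = (x:ℕ) + 1 := by omega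
      rw [this, Nat.mod_eq_of_lt (by omega)]
    · have hlt2 : m - (x:ℕ) + (y:ℕ) < m := by omega
      rw [Nat.mod_eq_of_lt hlt2] at h
      have hx1 : (x:ℕ) = m - 1 := by omega
      have hy0 : (y:ℕ) = 0 := by omega
      rw [hx1, hy0]
      have : m - 1 + 1 = m := by omega
      rw [this, Nat.mod_self]
  · intro h
    have hx := x.isLt
    rcases Nat.lt_or_ge ((x:ℕ) + 1) m with h1 | h1
    · rw [Nat.mod_eq_of_lt h1] at h
      have : m - (x:ℕ) + (y:ℕ) = m + 1 := by omega
      rw [this, Nat.add_mod_left, Nat.mod_eq_of_lt (by omega)]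
    · have hx1 : (x:ℕ) = m - 1 := by omega
      have hy0 : (y:ℕ) = 0 := by rw [hx1] at h; rw [h]; rw [show m - 1 + 1 = m by omega, Nat.mod_self]
      rw [hx1, hy0, Nat.mod_eq_of_lt (by omega)]; omega

lemma cycle_adj_iff {m : ℕ} (hm : 3 ≤ m) (x y : Fin m) :
    (cycleGraph m).Adj x y ↔ ((y : ℕ) = ((x : ℕ) + 1) % m ∨ (x : ℕ) = ((y : ℕ) + 1) % m) := by
  rw [cycleGraph_adj']
  rw [← sub_val_eq_one_iff hm x y, ← sub_val_eq_one_iff hm y x]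
  tauto



abbrev V (n m : ℕ) := Fin n ⊕ Fin n × Fin m

def vidx : V n m → ℕ := Sum.elim Fin.val fun p => (p.1 : ℕ)

noncomputable def elabF (n m N : ℕ) : Sym2 (V n m) → ℕ :=
  fun e => if ∀ v ∈ e, vidx v < N then 0 else 1

lemma elabF_mk (N : ℕ) (a b : V n m) :
    elabF n m N s(a, b) = if vidx a < N ∧ vidx b < N then 0 else 1 := by
  simp only [elabF]
  exact if_congr Sym2.ball rfl rfl

lemma elabF_zero_or_one (N : ℕ) (e : Sym2 (V n m)) :
    elabF n m N e = 0 ∨ elabF n m N e = 1 := by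
  unfold elabF; split <;> simp

def succ' (hn : 0 < n) (i : Fin n) : Fin n := ⟨((i : ℕ) + 1) % n, Nat.mod_lt _ hn⟩

noncomputable def PA (n m : ℕ) (hn : 0 < n) : Finset (Sym2 (V n m)) :=
  (univ.filter fun i : Fin n => (i : ℕ) + 1 < n).image
    fun i => s(Sum.inl i, Sum.inl (succ' hn i))

noncomputable def PB (n m : ℕ) : Finset (Sym2 (V n m)) :=
  (univ : Finset (Fin n × Fin m)).image fun p => s(Sum.inl p.1, Sum.inr p)

noncomputable def PC (n m : ℕ) (hm : 0 < m) : Finset (Sym2 (V n m)) :=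
  (univ : Finset (Fin n × Fin m)).image
    fun p => s(Sum.inr p, Sum.inr (p.1, succ' hm p.2))

lemma adj_corona (a b : V n m) :
    (corona (pathGraph n) (cycleGraph m)).Adj a b ↔ coronaAdj (pathGraph n) (cycleGraph m) a b := Iff.rfl

lemma edge_decomp (hn : 0 < n) (hm : 3 ≤ m) :
    (corona (pathGraph n) (cycleGraph m)).edgeFinset
      = PA n m hn ∪ PB n m ∪ PC n m (by omega) := by
  ext e
  refine Sym2.ind (fun a b => ?_) e
  rw [mem_edgeFinset, mem_edgeSet, adj_corona]
  simp only [PA, PB, PC, mem_union, mem_image, mem_filter, mem_univ, true_and,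
    Sym2.eq_iff, Prod.ext_iff]
  rcases a with u | ⟨i, x⟩ <;> rcases b with v | ⟨j, y⟩ <;>
    simp only [coronaAdj, reduceCtorEq, Sum.inl.injEq, Sum.inr.injEq, Prod.mk.injEq,
      and_false, false_and, or_self, exists_false, or_false, false_or, pathGraph_adj]
  · -- inl inl
    constructor
    · rintro (h | h)
      · refine ⟨u, by omega, Or.inl ⟨rfl, Fin.ext ?_⟩⟩
        show ((u : ℕ) + 1) % n = (v : ℕ); rw [Nat.mod_eq_of_lt (by omega)]; exact h
      · refine ⟨v, by omega, Or.inr ⟨rfl, Fin.ext ?_⟩⟩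
        show ((v : ℕ) + 1) % n = (u : ℕ); rw [Nat.mod_eq_of_lt (by omega)]; exact h
    · rintro ⟨a, ha, (⟨rfl, h⟩ | ⟨rfl, h⟩)⟩
      · left
        have h2 : ((a : ℕ) + 1) % n = (v : ℕ) := congrArg Fin.val h
        rw [Nat.mod_eq_of_lt ha] at h2; omega
      · right
        have h2 : ((a : ℕ) + 1) % n = (u : ℕ) := congrArg Fin.val h
        rw [Nat.mod_eq_of_lt ha] at h2; omega
  · -- inl inr
    constructor
    · rintro rfl; exact ⟨(u, y), rfl, rfl⟩
    · rintro ⟨a, h1, rfl⟩; exact h1.symm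
  · -- inr inl
    constructor
    · rintro rfl; exact ⟨(v, x), rfl, rfl⟩
    · rintro ⟨a, h1, rfl⟩; exact h1.symm
  · -- inr inr
    constructor
    · rintro ⟨rfl, hadj⟩
      rw [cycle_adj_iff hm] at hadj
      rcases hadj with h | h
      · exact ⟨(i, x), Or.inl ⟨rfl, rfl, Fin.ext h.symm⟩⟩
      · exact ⟨(i, y), Or.inr ⟨rfl, rfl, Fin.ext h.symm⟩⟩
    · rintro ⟨a, (⟨rfl, h1, h2⟩ | ⟨rfl, h1, h2⟩)⟩
      · refine ⟨h1, ?_⟩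
        rw [cycle_adj_iff hm]
        exact Or.inl (congrArg Fin.val h2).symm
      · refine ⟨h1.symm, ?_⟩
        rw [cycle_adj_iff hm]
        exact Or.inr (congrArg Fin.val h2).symm



lemma ite_zero_eq_zero {c : Prop} [Decidable c] : (if c then (0:ℕ) else 1) = 0 ↔ c := by
  split <;> simp [*]

lemma ite_zero_eq_one {c : Prop} [Decidable c] : (if c then (0:ℕ) else 1) = 1 ↔ ¬ c := by
  split <;> simp [*]

lemma elabF_one_iff (N : ℕ) (e : Sym2 (V n m)) :
    elabF n m N e = 1 ↔ ¬ elabF n m N e = 0 := by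
  unfold elabF; split <;> simp

lemma card_filter_fin_lt {k c : ℕ} (h : c ≤ k) :
    #((univ : Finset (Fin k)).filter fun i : Fin k => (i : ℕ) < c) = c := by
  have he : (univ : Finset (Fin k)).filter (fun i : Fin k => (i : ℕ) < c)
      = (Finset.range c).attachFin (fun x hx => lt_of_lt_of_le (mem_range.mp hx) h) := by
    ext i; simp [Finset.mem_attachFin]
  rw [he, Finset.card_attachFin, card_range]

lemma card_filter_prod {k l c : ℕ} (h : c ≤ k) :
    #((univ : Finset (Fin k × Fin l)).filter fun p : Fin k × Fin l => ((p.1 : ℕ) < c)) = c * l := by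
  have he : (univ : Finset (Fin k × Fin l)).filter (fun p : Fin k × Fin l => ((p.1 : ℕ) < c))
      = ((univ : Finset (Fin k)).filter fun i : Fin k => (i : ℕ) < c) ×ˢ (univ : Finset (Fin l)) := by
    ext p; simp [Finset.mem_product]
  rw [he, Finset.card_product, card_filter_fin_lt h, card_univ, Fintype.card_fin]

lemma injOn_PA (hn : 0 < n) (s : Finset (Fin n)) (hs : ∀ i ∈ s, (i : ℕ) + 1 < n) :
    Set.InjOn (fun i : Fin n => (s(Sum.inl i, Sum.inl (succ' hn i)) : Sym2 (V n m))) s := by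
  intro i hi j hj hij
  simp only [Sym2.eq_iff, Sum.inl.injEq] at hij
  rcases hij with ⟨h1, _⟩ | ⟨h1, h2⟩
  · exact h1
  · have e1 : (i : ℕ) = ((j : ℕ) + 1) % n := congrArg Fin.val h1
    have e2 : ((i : ℕ) + 1) % n = (j : ℕ) := congrArg Fin.val h2
    rw [Nat.mod_eq_of_lt (hs j hj)] at e1
    rw [Nat.mod_eq_of_lt (hs i hi)] at e2
    exact absurd e1 (by omega)

lemma card_PA (hn : 0 < n) : #(PA n m hn) = n - 1 := by
  rw [PA, Finset.card_image_of_injOn (injOn_PA hn _ (fun i hi => (mem_filter.mp hi).2))]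
  rw [show (univ.filter fun i : Fin n => (i : ℕ) + 1 < n) = univ.filter fun i : Fin n => (i : ℕ) < n - 1 from by ext i; simp; omega]
  exact card_filter_fin_lt (by omega)

lemma injective_PB :
    Function.Injective (fun p : Fin n × Fin m => (s(Sum.inl p.1, Sum.inr p) : Sym2 (V n m))) := by
  intro p q h
  simp only [Sym2.eq_iff, Sum.inr.injEq, reduceCtorEq, false_and, and_false, or_false] at h
  exact h.2

lemma card_PB : #(PB n m : Finset (Sym2 (V n m))) = n * m := by
  rw [PB, Finset.card_image_of_injective _ injective_PB, card_univ, Fintype.card_prod,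
    Fintype.card_fin, Fintype.card_fin]

lemma injective_PC (hm : 3 ≤ m) :
    Function.Injective (fun p : Fin n × Fin m =>
      (s(Sum.inr p, Sum.inr (p.1, succ' (by omega : 0 < m) p.2)) : Sym2 (V n m))) := by
  intro p q h
  simp only [Sym2.eq_iff, Sum.inr.injEq, Prod.mk.injEq] at h
  rcases h with ⟨h1, _⟩ | ⟨h1, h2⟩
  · exact h1
  · exfalso
    have e1 : (p.2 : ℕ) = ((q.2 : ℕ) + 1) % m := by
      have := congrArg (fun z : Fin n × Fin m => (z.2 : ℕ)) h1; simpa [succ'] using this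
    have e2 : (q.2 : ℕ) = ((p.2 : ℕ) + 1) % m := by
      have := congrArg Prod.snd h2
      have := congrArg Fin.val this; simpa [succ'] using this.symm
    rw [e2] at e1
    exact nat_succ_mod_ne hm p.2.isLt e1.symm

lemma card_PC (hm : 3 ≤ m) : #(PC n m (by omega : 0 < m) : Finset (Sym2 (V n m))) = n * m := by
  rw [PC, Finset.card_image_of_injective _ (injective_PC hm), card_univ, Fintype.card_prod,
    Fintype.card_fin, Fintype.card_fin]



lemma disj_AB (hn : 0 < n) : Disjoint (PA n m hn) (PB n m) := by
  rw [Finset.disjoint_left]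
  rintro e hA hB
  rw [PA, mem_image] at hA
  rw [PB, mem_image] at hB
  obtain ⟨i, -, rfl⟩ := hA
  obtain ⟨p, -, hp⟩ := hB
  simp [Sym2.eq_iff] at hp

lemma disj_AC (hn : 0 < n) (hm' : 0 < m) : Disjoint (PA n m hn) (PC n m hm') := by
  rw [Finset.disjoint_left]
  rintro e hA hC
  rw [PA, mem_image] at hA
  rw [PC, mem_image] at hC
  obtain ⟨i, -, rfl⟩ := hA
  obtain ⟨p, -, hp⟩ := hC
  simp [Sym2.eq_iff] at hp

lemma disj_BC (hm' : 0 < m) : Disjoint (PB n m) (PC n m hm') := by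
  rw [Finset.disjoint_left]
  rintro e hB hC
  rw [PB, mem_image] at hB
  rw [PC, mem_image] at hC
  obtain ⟨p, -, rfl⟩ := hB
  obtain ⟨q, -, hq⟩ := hC
  simp [Sym2.eq_iff] at hq

lemma card_edge (hn : 0 < n) (hm : 3 ≤ m) :
    #(corona (pathGraph n) (cycleGraph m)).edgeFinset = 2 * n * m + n - 1 := by
  rw [edge_decomp hn hm,
    Finset.card_union_of_disjoint (Finset.disjoint_union_left.mpr ⟨disj_AC hn _, disj_BC _⟩),
    Finset.card_union_of_disjoint (disj_AB hn), card_PA hn, card_PB, card_PC hm]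
  rw [show 2 * n * m = n * m + n * m from by ring]
  omega

lemma e0_count (hn : 0 < n) (hm : 3 ≤ m) {N : ℕ} (hN1 : 1 ≤ N) (hNn : N + N ≤ n) :
    eCount (corona (pathGraph n) (cycleGraph m)) (elabF n m N) 0
      = (N - 1) + N * m + N * m := by
  simp only [eCount]
  rw [edge_decomp hn hm, filter_union, filter_union,
    Finset.card_union_of_disjoint
      (Finset.disjoint_union_left.mpr
        ⟨Finset.disjoint_filter_filter (disj_AC hn _),
         Finset.disjoint_filter_filter (disj_BC _)⟩),
    Finset.card_union_of_disjoint (Finset.disjoint_filter_filter (disj_AB hn))]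
  have hA : #((PA n m hn).filter fun e => elabF n m N e = 0) = N - 1 := by
    rw [PA, Finset.filter_image]
    have hset : ((univ.filter fun i : Fin n => (i : ℕ) + 1 < n).filter
          (fun i => elabF n m N s(Sum.inl i, Sum.inl (succ' hn i)) = 0))
        = univ.filter fun i : Fin n => (i : ℕ) < N - 1 := by
      ext i
      simp only [mem_filter, mem_univ, true_and, elabF_mk, ite_zero_eq_zero]
      simp only [vidx, Sum.elim_inl, succ', and_assoc]
      constructor
      · rintro ⟨h1, h2, h3⟩
        rw [Nat.mod_eq_of_lt h1] at h3; omega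
      · intro h
        have h1 : (i : ℕ) + 1 < n := by omega
        exact ⟨h1, by omega, by rw [Nat.mod_eq_of_lt h1]; omega⟩
    rw [hset, Finset.card_image_of_injOn
      (injOn_PA hn _ (fun i hi => by
        have := (mem_filter.mp hi).2; omega))]
    exact card_filter_fin_lt (by omega)
  have hB : #((PB n m : Finset (Sym2 (V n m))).filter fun e => elabF n m N e = 0) = N * m := by
    rw [PB, Finset.filter_image]
    have hset : ((univ : Finset (Fin n × Fin m)).filter
          (fun p => elabF n m N s(Sum.inl p.1, Sum.inr p) = 0))
        = univ.filter fun p : Fin n × Fin m => (p.1 : ℕ) < N := by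
      ext p
      simp [elabF_mk, vidx, ite_zero_eq_zero]
    rw [hset, Finset.card_image_of_injOn injective_PB.injOn]
    exact card_filter_prod (by omega)
  have hC : #((PC n m (by omega : 0 < m) : Finset (Sym2 (V n m))).filter
        fun e => elabF n m N e = 0) = N * m := by
    rw [PC, Finset.filter_image]
    have hset : ((univ : Finset (Fin n × Fin m)).filter
          (fun p => elabF n m N s(Sum.inr p, Sum.inr (p.1, succ' (by omega : 0 < m) p.2)) = 0))
        = univ.filter fun p : Fin n × Fin m => (p.1 : ℕ) < N := by
      ext p
      simp [elabF_mk, vidx, ite_zero_eq_zero]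
    rw [hset, Finset.card_image_of_injOn (injective_PC hm).injOn]
    exact card_filter_prod (by omega)
  rw [hA, hB, hC]

lemma e1_count (hn : 0 < n) (hm : 3 ≤ m) (N : ℕ) :
    eCount (corona (pathGraph n) (cycleGraph m)) (elabF n m N) 1
      = #(corona (pathGraph n) (cycleGraph m)).edgeFinset
        - eCount (corona (pathGraph n) (cycleGraph m)) (elabF n m N) 0 := by
  simp only [eCount]
  rw [Finset.filter_congr (fun e _ => elabF_one_iff N e), Finset.filter_not,
    Finset.card_sdiff_of_subset (filter_subset _ _)]

lemma induced_eq (hn : 0 < n) (hm : 3 ≤ m) (N : ℕ) (v : V n m) :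
    inducedLabel (corona (pathGraph n) (cycleGraph m)) (elabF n m N) v
      = if vidx v < N then 0 else 1 := by
  unfold inducedLabel
  by_cases h : vidx v < N
  · rw [if_pos h]
    rcases v with i | ⟨i, x⟩
    · refine Finset.prod_eq_zero (i := Sum.inr (i, ⟨0, by omega⟩)) ?_ ?_
      · simp only [mem_filter, mem_univ, true_and]
        exact rfl
      · rw [elabF_mk, if_pos ⟨h, h⟩]
    · refine Finset.prod_eq_zero (i := Sum.inl i) ?_ ?_
      · simp only [mem_filter, mem_univ, true_and]
        exact rfl
      · rw [elabF_mk, if_pos ⟨h, h⟩]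
  · rw [if_neg h]
    refine Finset.prod_eq_one fun u hu => ?_
    rw [elabF_mk, if_neg fun hc => h hc.1]

lemma v0_count (hn : 0 < n) (hm : 3 ≤ m) {N : ℕ} (hN : N ≤ n) :
    vCount (corona (pathGraph n) (cycleGraph m)) (elabF n m N) 0 = N + N * m := by
  simp only [vCount]
  have hset : ((univ : Finset (V n m)).filter
        fun v => inducedLabel (corona (pathGraph n) (cycleGraph m)) (elabF n m N) v = 0)
      = ((univ.filter fun i : Fin n => (i : ℕ) < N).disjSum
          (univ.filter fun p : Fin n × Fin m => (p.1 : ℕ) < N)) := by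
    ext v
    rcases v with i | p <;>
      simp only [mem_filter, mem_univ, true_and, induced_eq hn hm, ite_zero_eq_zero] <;>
      simp [Finset.mem_disjSum, vidx]
  rw [hset, Finset.card_disjSum, card_filter_fin_lt hN, card_filter_prod hN]

lemma v1_count (hn : 0 < n) (hm : 3 ≤ m) (N : ℕ) :
    vCount (corona (pathGraph n) (cycleGraph m)) (elabF n m N) 1
      = (n + n * m)
        - vCount (corona (pathGraph n) (cycleGraph m)) (elabF n m N) 0 := by
  simp only [vCount]
  have h1 : ∀ v : V n m, inducedLabel (corona (pathGraph n) (cycleGraph m)) (elabF n m N) v = 1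
      ↔ ¬ inducedLabel (corona (pathGraph n) (cycleGraph m)) (elabF n m N) v = 0 := by
    intro v
    rw [induced_eq hn hm]
    split <;> simp
  rw [Finset.filter_congr (fun v _ => h1 v), Finset.filter_not,
    Finset.card_sdiff_of_subset (filter_subset _ _), card_univ]
  congr 1
  simp [Fintype.card_sum, Fintype.card_prod]

end CoronaTEPC

/-- For even positive `n` and `m ≥ 3`, the corona graph `P_n ∘ C_m` admits an
edge labeling with `e_f(0) = (2nm + n - 2)/2`, `e_f(1) = (2nm + n)/2`,
`v_f(0) = v_f(1) = (n + nm)/2`; in particular it is total edge product cordial. -/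
theorem corona_path_cycle_even_counts (n m : ℕ) (hn : 0 < n) (hne : Even n) (hm : 3 ≤ m) :
    ∃ f : Sym2 (Fin n ⊕ Fin n × Fin m) → ℕ,
      (∀ e ∈ (corona (pathGraph n) (cycleGraph m)).edgeSet, f e = 0 ∨ f e = 1) ∧
      eCount (corona (pathGraph n) (cycleGraph m)) f 0 = (2 * n * m + n - 2) / 2 ∧
      eCount (corona (pathGraph n) (cycleGraph m)) f 1 = (2 * n * m + n) / 2 ∧
      vCount (corona (pathGraph n) (cycleGraph m)) f 0 = (n + n * m) / 2 ∧
      vCount (corona (pathGraph n) (cycleGraph m)) f 1 = (n + n * m) / 2 ∧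
      |((vCount (corona (pathGraph n) (cycleGraph m)) f 0 : ℤ) +
          (eCount (corona (pathGraph n) (cycleGraph m)) f 0 : ℤ)) -
        ((vCount (corona (pathGraph n) (cycleGraph m)) f 1 : ℤ) +
          (eCount (corona (pathGraph n) (cycleGraph m)) f 1 : ℤ))| ≤ 1 := by
  
  obtain ⟨N, hn2⟩ := hne
  have hN1 : 1 ≤ N := by omega
  refine ⟨CoronaTEPC.elabF n m N, fun e _ => CoronaTEPC.elabF_zero_or_one N e, ?_, ?_, ?_, ?_, ?_⟩
  all_goals {
    have he0 := CoronaTEPC.e0_count hn hm hN1 (by omega : N + N ≤ n)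
    have hE := CoronaTEPC.card_edge (n := n) (m := m) hn hm
    have he1 := CoronaTEPC.e1_count (n := n) (m := m) hn hm N
    have hv0 := CoronaTEPC.v0_count (n := n) (m := m) hn hm (N := N) (by omega)
    have hv1 := CoronaTEPC.v1_count (n := n) (m := m) hn hm N
    have hmm1 : n * m = N * m + N * m := by rw [hn2]; ring
    have hmm2 : 2 * n * m = N * m + N * m + (N * m + N * m) := by rw [hn2]; ring
    first
    | (rw [he0]; omega)
    | (rw [he1, hE, he0]; omega)
    | (rw [hv0]; omega)
    | (rw [hv1, hv0]; omega)
    | (have hv : vCount (corona (pathGraph n) (cycleGraph m)) (CoronaTEPC.elabF n m N) 1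
          = vCount (corona (pathGraph n) (cycleGraph m)) (CoronaTEPC.elabF n m N) 0 := by
        rw [hv1, hv0]; omega
       have he : eCount (corona (pathGraph n) (cycleGraph m)) (CoronaTEPC.elabF n m N) 1
          = eCount (corona (pathGraph n) (cycleGraph m)) (CoronaTEPC.elabF n m N) 0 + 1 := by
        rw [he1, hE, he0]; omega
       rw [hv, he]
       push_cast
       have habs : ∀ a b : ℤ, |a + b - (a + (b + 1))| ≤ 1 := by
         intro a b
         rw [show a + b - (a + (b + 1)) = -1 by ring]
         norm_num
       exact habs _ _) }
end
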